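/- Let k be a field of characteristic p > 0 and E an elementary abelian p-group of rank r viewed inside the torus T = (S^1)^r via p-th roots of unity. Then the restriction map H^*(BT; k) → H^*(BE; k) is an F-isomorphism, i.e., its kernel consists of nilpotent elements and every element of the target has a p^n-th power in the image. -/

import Mathlib

open TensorProduct

/-- An *F-isomorphism* (at the prime `p`) of rings: a ring homomorphism whose kernel
consists of nilpotent elements and such that every element of the target has some
`p^n`-th power in the image. -/
def IsFIsomorphism (p : ℕ) {A B : Type*} [Semiring A] [Semiring B] (f : A →+* B) : Prop :=
  (∀ a : A, f a = 0 → IsNilpotent a) ∧ ∀ b : B, ∃ n : ℕ, b ^ (p ^ n) ∈ Set.range f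

section MvAux

open MvPolynomial

variable {σ R : Type*} [CommSemiring R]

lemma expand_monomial_smul (p : ℕ) (hp : p ≠ 0) (d : σ →₀ ℕ) (r : R) :
    expand p (monomial d r) = monomial (p • d) r := by
  rw [expand_monomial, monomial_eq, Finsupp.prod]

lemma coeff_expand_smul {p : ℕ} (hp : p ≠ 0) (f : MvPolynomial σ R) (d : σ →₀ ℕ) :
    (expand p f).coeff (p • d) = f.coeff d := by
  have hinj : Function.Injective (fun d : σ →₀ ℕ => p • d) := by
    intro a b h
    ext i
    have := DFunLike.congr_fun h i
    simp only [Finsupp.smul_apply, smul_eq_mul] at this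
    exact Nat.eq_of_mul_eq_mul_left (Nat.pos_of_ne_zero hp) this
  induction f using MvPolynomial.induction_on' with
  | monomial d' r =>
      classical
      rw [expand_monomial_smul p hp, coeff_monomial, coeff_monomial]
      by_cases h : d' = d
      · subst h; simp
      · rw [if_neg h, if_neg fun hc => h (hinj hc)]
  | add f g hf hg => rw [map_add, coeff_add, coeff_add, hf, hg]

lemma expand_injective' {p : ℕ} (hp : p ≠ 0) :
    Function.Injective (expand p : MvPolynomial σ R → MvPolynomial σ R) := by
  intro f g h
  ext d
  rw [← coeff_expand_smul hp f d, h, coeff_expand_smul hp g d]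

lemma expand_map_frobenius {k : Type*} [Field k] (p : ℕ) [Fact p.Prime] [CharP k p]
    (f : MvPolynomial σ k) :
    expand p (MvPolynomial.map (frobenius k p) f) = f ^ p := by
  induction f using MvPolynomial.induction_on with
  | C a => rw [map_C, expand_C, frobenius_def, C_pow]
  | add f g hf hg => rw [map_add, map_add, hf, hg, add_pow_char]
  | mul_X f i hf => rw [map_mul, map_X, map_mul, hf, expand_X, mul_pow]

end MvAux

section ExtAux

variable (k : Type) [Field k] (r : ℕ)

local notation "Λ" => ExteriorAlgebra k (Fin r → k)

/-- The submodule of the exterior algebra generated by the vectors. -/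
noncomputable def extV : Submodule k Λ :=
  LinearMap.range (ExteriorAlgebra.ι k (M := Fin r → k))

lemma extV_pow_top : extV k r ^ (r + 1) = ⊥ := by
  haveI : NoZeroSMulDivisors k Λ := GroupWithZero.toNoZeroSMulDivisors
  have h : (⋀[k]^(r+1) (Fin r → k) : Submodule k Λ) = ⊥ := by
    rw [← ExteriorAlgebra.ιMulti_span_fixedDegree]
    refine le_bot_iff.mp (Submodule.span_le.mpr ?_)
    rintro x ⟨v, rfl⟩
    have hv : ¬ LinearIndependent k v := by
      intro hv
      have := hv.fintype_card_le_finrank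
      rw [Module.finrank_fin_fun, Fintype.card_fin] at this
      omega
    simpa using (ExteriorAlgebra.ιMulti k (r+1)).map_linearDependent v hv
  exact h

lemma extV_pow_le_ker (n : ℕ) :
    extV k r ^ (n + 1) ≤
      LinearMap.ker (ExteriorAlgebra.algebraMapInv (R := k) (M := Fin r → k)).toLinearMap := by
  induction n with
  | zero =>
      rw [pow_one]
      rintro x ⟨m, rfl⟩
      simp [LinearMap.mem_ker, ExteriorAlgebra.algebraMapInv]
  | succ n ih =>
      rw [pow_succ]
      refine Submodule.mul_le.mpr fun x hx y hy => ?_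
      have hx0 : ExteriorAlgebra.algebraMapInv x = 0 := ih hx
      simp [LinearMap.mem_ker, map_mul, hx0]

/-- Positive-degree part of the exterior algebra. -/
noncomputable def extW : Submodule k Λ :=
  ⨆ n : ℕ, extV k r ^ (n + 1)

lemma extW_pow_le (m : ℕ) : extW k r ^ m ≤ ⨆ n : ℕ, extV k r ^ (n + m) := by
  induction m with
  | zero =>
      rw [pow_zero]
      refine le_trans (le_of_eq ?_) (le_iSup (fun n => extV k r ^ (n + 0)) 0)
      rw [zero_add, pow_zero]
  | succ m ih =>
      rw [pow_succ]
      refine le_trans (mul_le_mul' ih le_rfl) ?_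
      rw [Submodule.iSup_mul]
      refine iSup_le fun n => ?_
      rw [extW, Submodule.mul_iSup]
      refine iSup_le fun n' => ?_
      have : extV k r ^ (n + m) * extV k r ^ (n' + 1) = extV k r ^ ((n + n') + (m + 1)) := by
        rw [← pow_add]; congr 1; omega
      rw [this]
      exact le_iSup (fun q => extV k r ^ (q + (m + 1))) (n + n')

lemma extW_pow_bot : extW k r ^ (r + 1) = ⊥ := by
  refine le_bot_iff.mp (le_trans (extW_pow_le k r (r + 1)) (iSup_le fun n => ?_))
  have : extV k r ^ (n + (r + 1)) = extV k r ^ n * extV k r ^ (r + 1) := by rw [← pow_add]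
  rw [this, extV_pow_top, Submodule.mul_bot]

lemma ext_sub_mem_extW (a : Λ) :
    a - algebraMap k Λ (ExteriorAlgebra.algebraMapInv a) ∈ extW k r := by
  induction a using DirectSum.Decomposition.inductionOn (fun i => ⋀[k]^i (Fin r → k)) with
  | zero => simp
  | add a b ha hb =>
      have : a + b - algebraMap k Λ (ExteriorAlgebra.algebraMapInv (a + b)) =
          (a - algebraMap k Λ (ExteriorAlgebra.algebraMapInv a)) +
          (b - algebraMap k Λ (ExteriorAlgebra.algebraMapInv b)) := by
        rw [map_add, map_add]; abel
      rw [this]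
      exact add_mem ha hb
  | homogeneous m =>
      rename_i i
      obtain ⟨a, ha⟩ := m
      cases i with
      | zero =>
          have ha1 : a ∈ (1 : Submodule k Λ) := by
            rw [← pow_zero (LinearMap.range (ExteriorAlgebra.ι k (M := Fin r → k)))]
            exact ha
          obtain ⟨c, rfl⟩ := Submodule.mem_one.mp ha1
          simp
      | succ n =>
          have h0 : ExteriorAlgebra.algebraMapInv a = 0 := extV_pow_le_ker k r n ha
          rw [h0, map_zero, sub_zero]
          exact le_iSup (fun n => extV k r ^ (n + 1)) n ha

end ExtAux

set_option maxHeartbeats 1000000 in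
theorem stmt_3 (k : Type) [Field k] (p : ℕ) [Fact p.Prime] [CharP k p] (r : ℕ) :
    (p = 2 →
      IsFIsomorphism p
        ((MvPolynomial.aeval (fun i : Fin r => (MvPolynomial.X i : MvPolynomial (Fin r) k) ^ 2) :
            MvPolynomial (Fin r) k →ₐ[k] MvPolynomial (Fin r) k) :
          MvPolynomial (Fin r) k →+* MvPolynomial (Fin r) k)) ∧
    (Odd p →
      IsFIsomorphism p
        ((Algebra.TensorProduct.includeRight :
            MvPolynomial (Fin r) k →ₐ[k]
              (ExteriorAlgebra k (Fin r → k) ⊗[k] MvPolynomial (Fin r) k)) :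
          MvPolynomial (Fin r) k →+*
            (ExteriorAlgebra k (Fin r → k) ⊗[k] MvPolynomial (Fin r) k))) := by
  constructor
  · -- p = 2
    intro hp2
    subst hp2
    have heq : (MvPolynomial.aeval
        (fun i : Fin r => (MvPolynomial.X i : MvPolynomial (Fin r) k) ^ 2) :
        MvPolynomial (Fin r) k →ₐ[k] MvPolynomial (Fin r) k) = MvPolynomial.expand 2 := by
      ext i
      simp [MvPolynomial.expand_X]
    rw [heq]
    constructor
    · intro a ha
      have : a = 0 := expand_injective' (two_ne_zero) (by simpa using ha)
      simp [this]
    · intro b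
      refine ⟨1, MvPolynomial.map (frobenius k 2) b, ?_⟩
      simpa using expand_map_frobenius 2 b
  · -- p odd
    intro _
    set Λ := ExteriorAlgebra k (Fin r → k)
    set P := MvPolynomial (Fin r) k
    set A := Λ ⊗[k] P
    set ε : Λ →ₐ[k] k := ExteriorAlgebra.algebraMapInv with hε
    set ρ : A →ₐ[k] P :=
      Algebra.TensorProduct.productMap ((Algebra.ofId k P).comp ε) (AlgHom.id k P) with hρ
    have hρ_incl : ∀ x : P, ρ (Algebra.TensorProduct.includeRight x) = x := by
      intro x
      rw [hρ, Algebra.TensorProduct.includeRight_apply, Algebra.TensorProduct.productMap_apply_tmul]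
      simp
    have hPinj : Function.Injective (algebraMap k P) := (algebraMap k P).injective
    haveI : CharP A p := by
      refine charP_of_injective_algebraMap (R := k) (A := A) ?_ p
      intro x y h
      have := congrArg ρ h
      rw [AlgHom.commutes, AlgHom.commutes] at this
      exact hPinj this
    -- the "positive degree" submodule of A
    set U : Submodule k A :=
      Submodule.span k {x : A | ∃ a ∈ extW k r, ∃ y : P, a ⊗ₜ[k] y = x} with hU
    have hmulU : ∀ C D : Submodule k Λ,
        (Submodule.span k {x : A | ∃ a ∈ C, ∃ y : P, a ⊗ₜ[k] y = x}) *
          (Submodule.span k {x : A | ∃ a ∈ D, ∃ y : P, a ⊗ₜ[k] y = x}) ≤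
        Submodule.span k {x : A | ∃ a ∈ C * D, ∃ y : P, a ⊗ₜ[k] y = x} := by
      intro C D
      rw [Submodule.span_mul_span]
      refine Submodule.span_le.mpr ?_
      rintro z ⟨z1, ⟨a1, ha1, y1, rfl⟩, z2, ⟨a2, ha2, y2, rfl⟩, rfl⟩
      exact Submodule.subset_span ⟨a1 * a2, Submodule.mul_mem_mul ha1 ha2, y1 * y2,
        (Algebra.TensorProduct.tmul_mul_tmul a1 a2 y1 y2).symm⟩
    have hUpow : ∀ m : ℕ, U ^ (m + 1) ≤
        Submodule.span k {x : A | ∃ a ∈ extW k r ^ (m + 1), ∃ y : P, a ⊗ₜ[k] y = x} := by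
      intro m
      induction m with
      | zero =>
          simp only [zero_add, pow_one]
          exact le_of_eq ((pow_one U).trans hU)
      | succ m ih =>
          rw [pow_succ]
          refine le_trans (mul_le_mul' ih le_rfl) ?_
          rw [hU]
          refine le_trans (hmulU _ _) (le_of_eq ?_)
          rw [← pow_succ]
    have hUbot : U ^ (r + 1) = ⊥ := by
      refine le_bot_iff.mp (le_trans (hUpow r) ?_)
      rw [extW_pow_bot]
      refine Submodule.span_le.mpr ?_
      rintro z ⟨a, ha, y, rfl⟩
      rw [Submodule.mem_bot] at ha
      simp [ha]
    have hmemU : ∀ b : A, b - Algebra.TensorProduct.includeRight (ρ b) ∈ U := by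
      intro b
      induction b using TensorProduct.induction_on with
      | zero => simp
      | tmul a y =>
          have h1 : ρ (a ⊗ₜ[k] y) = algebraMap k P (ε a) * y := by
            rw [hρ, Algebra.TensorProduct.productMap_apply_tmul]
            simp [Algebra.ofId_apply]
          rw [h1, Algebra.TensorProduct.includeRight_apply]
          have h2 : algebraMap k Λ (ε a) ⊗ₜ[k] y = (1 : Λ) ⊗ₜ[k] (algebraMap k P (ε a) * y) := by
            rw [Algebra.algebraMap_eq_smul_one (R := k) (A := Λ), TensorProduct.smul_tmul,
              Algebra.smul_def]
          rw [← h2, ← TensorProduct.sub_tmul]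
          exact Submodule.subset_span ⟨a - algebraMap k Λ (ε a), ext_sub_mem_extW k r a, y, rfl⟩
      | add x y hx hy =>
          have : x + y - Algebra.TensorProduct.includeRight (ρ (x + y)) =
              (x - Algebra.TensorProduct.includeRight (ρ x)) +
              (y - Algebra.TensorProduct.includeRight (ρ y)) := by
            rw [map_add, map_add]; abel
          rw [this]
          exact add_mem hx hy
    have hcentral : ∀ (x : P) (b : A),
        Commute ((Algebra.TensorProduct.includeRight : P →ₐ[k] A) x) b := by
      intro x b
      induction b using TensorProduct.induction_on with
      | zero => exact Commute.zero_right _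
      | tmul a y =>
          show _ * _ = _ * _
          rw [Algebra.TensorProduct.includeRight_apply, Algebra.TensorProduct.tmul_mul_tmul,
            Algebra.TensorProduct.tmul_mul_tmul, one_mul, mul_one, mul_comm]
      | add u v hu hv => exact Commute.add_right hu hv
    constructor
    · intro a ha
      have : a = 0 := by
        have := congrArg ρ ha
        rw [map_zero] at this
        rw [← hρ_incl a]
        exact this.trans (by simp)
      simp [this]
    · intro b
      have hnU : b - Algebra.TensorProduct.includeRight (ρ b) ∈ U := hmemU b
      have hnpow : (b - Algebra.TensorProduct.includeRight (ρ b)) ^ (r + 1) = 0 := by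
        have h := Submodule.pow_mem_pow U hnU (r + 1)
        rw [hUbot, Submodule.mem_bot] at h
        exact h
      have hple : r + 1 ≤ p ^ (r + 1) :=
        (Nat.lt_pow_self (n := r + 1) (Fact.out : p.Prime).one_lt).le
      have hnzero : (b - Algebra.TensorProduct.includeRight (ρ b)) ^ (p ^ (r + 1)) = 0 := by
        rw [← Nat.sub_add_cancel hple, pow_add, hnpow, mul_zero]
      refine ⟨r + 1, (ρ b) ^ (p ^ (r + 1)), ?_⟩
      show (Algebra.TensorProduct.includeRight : P →ₐ[k] A) ((ρ b) ^ (p ^ (r + 1)))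
          = b ^ (p ^ (r + 1))
      have hb : b = Algebra.TensorProduct.includeRight (ρ b)
          + (b - Algebra.TensorProduct.includeRight (ρ b)) := by abel
      rw [map_pow]
      conv_rhs => rw [hb]
      rw [add_pow_char_pow_of_commute _ _ (hcentral (ρ b) _), hnzero, add_zero]
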